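/- Second-order Flett theorem: Let a < b and let f : ℝ → ℝ be twice differentiable at every point of the closed interval [a, b] (one-sided derivatives at the endpoints), with f''(a) = f''(b). Then there exists ξ ∈ (a, b) such that f(ξ) - f(a) = (ξ - a) * f'(ξ) - ((ξ - a)^2 / 2) * f''(ξ). -/

import Mathlib

open Set Filter Topology

lemma flett_core (H G : ℝ → ℝ) (a b : ℝ) (hab : a < b)
    (hc : ContinuousOn H (Set.Icc a b))
    (hd : ∀ x ∈ Set.Ioc a b, HasDerivWithinAt H (G x) (Set.Icc a b) x)
    (hGb : G b = 2 * (H a - H b) / (b - a)) :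
    ∃ ξ ∈ Set.Ioo a b, G ξ = 0 := by
  have hba : (0:ℝ) < b - a := by linarith
  have fermat_max : ∀ c ∈ Set.Ioo a b, IsMaxOn H (Set.Icc a b) c → G c = 0 := by
    intro c hcm hmax
    have hda : HasDerivAt H (G c) c :=
      (hd c ⟨hcm.1, hcm.2.le⟩).hasDerivAt (Icc_mem_nhds hcm.1 hcm.2)
    exact (hmax.isLocalMax (Icc_mem_nhds hcm.1 hcm.2)).hasDerivAt_eq_zero hda
  have fermat_min : ∀ c ∈ Set.Ioo a b, IsMinOn H (Set.Icc a b) c → G c = 0 := by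
    intro c hcm hmin
    have hda : HasDerivAt H (G c) c :=
      (hd c ⟨hcm.1, hcm.2.le⟩).hasDerivAt (Icc_mem_nhds hcm.1 hcm.2)
    exact (hmin.isLocalMin (Icc_mem_nhds hcm.1 hcm.2)).hasDerivAt_eq_zero hda
  have hne : (Set.Icc a b).Nonempty := Set.nonempty_Icc.2 hab.le
  obtain ⟨c, hcmem, hcmax⟩ := isCompact_Icc.exists_isMaxOn hne hc
  obtain ⟨d, hdmem, hdmin⟩ := isCompact_Icc.exists_isMinOn hne hc
  have hamem : a ∈ Set.Icc a b := Set.left_mem_Icc.2 hab.le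
  have hbmem : b ∈ Set.Icc a b := Set.right_mem_Icc.2 hab.le
  have hnb : (𝓝[Set.Ico a b] b).NeBot := by
    apply mem_closure_iff_nhdsWithin_neBot.1
    rw [closure_Ico hab.ne]
    exact Set.right_mem_Icc.2 hab.le
  have hslope : Tendsto (slope H b) (𝓝[Set.Ico a b] b) (𝓝 (G b)) := by
    have := hasDerivWithinAt_iff_tendsto_slope.1 (hd b (Set.right_mem_Ioc.2 hab))
    rwa [Set.Icc_sdiff_right] at this
  have hIoo : ∀ y ∈ Set.Icc a b, y ≠ a → y ≠ b → y ∈ Set.Ioo a b := by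
    intro y hy h1 h2
    exact ⟨lt_of_le_of_ne hy.1 (Ne.symm h1), lt_of_le_of_ne hy.2 h2⟩
  rcases lt_trichotomy (H a) (H b) with hlt | heq | hgt
  · -- H a < H b : G b < 0, find x with H x > H b, interior max
    have hGbneg : G b < 0 := by
      rw [hGb]; apply div_neg_of_neg_of_pos <;> linarith
    have h1 : ∀ᶠ x in 𝓝[Set.Ico a b] b, slope H b x < 0 := hslope (Iio_mem_nhds hGbneg)
    have h2 : ∀ᶠ x in 𝓝[Set.Ico a b] b, a < x :=
      (eventually_gt_nhds hab).filter_mono nhdsWithin_le_nhds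
    have h3 : ∀ᶠ x in 𝓝[Set.Ico a b] b, x ∈ Set.Ico a b := self_mem_nhdsWithin
    obtain ⟨x, hx1, hx2, hx3⟩ := (h1.and (h2.and h3)).exists
    rw [slope_def_field] at hx1
    have hxb : x - b < 0 := by linarith [hx3.2]
    have hx4 : H b < H x := by
      rcases div_neg_iff.1 hx1 with ⟨h, h'⟩ | ⟨h, h'⟩ <;> linarith
    have hxmem : x ∈ Set.Icc a b := ⟨hx3.1, hx3.2.le⟩
    have hcx : H x ≤ H c := hcmax hxmem
    have hca : c ≠ a := fun h => by rw [h] at hcx; linarith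
    have hcb : c ≠ b := fun h => by rw [h] at hcx; linarith
    exact ⟨c, hIoo c hcmem hca hcb, fermat_max c (hIoo c hcmem hca hcb) hcmax⟩
  · -- H a = H b
    have hac : H a ≤ H c := hcmax hamem
    have hda' : H d ≤ H a := hdmin hamem
    rcases eq_or_lt_of_le hac with h1 | h1
    · rcases eq_or_lt_of_le hda' with h2 | h2
      · -- H constant
        have hmid : (a + b) / 2 ∈ Set.Ioo a b := ⟨by linarith, by linarith⟩
        have hconst : ∀ y ∈ Set.Icc a b, H y = H a := by
          intro y hy
          have h3 : H y ≤ H c := hcmax hy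
          have h4 : H d ≤ H y := hdmin hy
          linarith
        have hmax : IsMaxOn H (Set.Icc a b) ((a + b) / 2) := by
          intro y hy
          have h3 := hconst y hy
          have h4 := hconst _ (Set.mem_Icc.2 ⟨hmid.1.le, hmid.2.le⟩)
          simp only [Set.mem_setOf_eq]
          rw [h3, h4]
        exact ⟨(a + b) / 2, hmid, fermat_max _ hmid hmax⟩
      · -- min is interior
        have hdb : H d < H b := by rw [← heq]; exact h2
        have hda2 : d ≠ a := fun h => by rw [h] at h2; linarith
        have hdb2 : d ≠ b := fun h => by rw [h] at hdb; linarith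
        exact ⟨d, hIoo d hdmem hda2 hdb2, fermat_min d (hIoo d hdmem hda2 hdb2) hdmin⟩
    · -- max is interior
      have hcb' : H b < H c := by rw [← heq]; exact h1
      have hca : c ≠ a := fun h => by rw [h] at h1; linarith
      have hcb : c ≠ b := fun h => by rw [h] at hcb'; linarith
      exact ⟨c, hIoo c hcmem hca hcb, fermat_max c (hIoo c hcmem hca hcb) hcmax⟩
  · -- H b < H a : G b > 0, find x with H x < H b, interior min
    have hGbpos : 0 < G b := by
      rw [hGb]; apply div_pos <;> linarith
    have h1 : ∀ᶠ x in 𝓝[Set.Ico a b] b, 0 < slope H b x := hslope (Ioi_mem_nhds hGbpos)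
    have h2 : ∀ᶠ x in 𝓝[Set.Ico a b] b, a < x :=
      (eventually_gt_nhds hab).filter_mono nhdsWithin_le_nhds
    have h3 : ∀ᶠ x in 𝓝[Set.Ico a b] b, x ∈ Set.Ico a b := self_mem_nhdsWithin
    obtain ⟨x, hx1, hx2, hx3⟩ := (h1.and (h2.and h3)).exists
    rw [slope_def_field] at hx1
    have hxb : x - b < 0 := by linarith [hx3.2]
    have hx4 : H x < H b := by
      rcases div_pos_iff.1 hx1 with ⟨h, h'⟩ | ⟨h, h'⟩ <;> linarith
    have hxmem : x ∈ Set.Icc a b := ⟨hx3.1, hx3.2.le⟩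
    have hdx : H d ≤ H x := hdmin hxmem
    have hda2 : d ≠ a := fun h => by rw [h] at hdx; linarith
    have hdb2 : d ≠ b := fun h => by rw [h] at hdx; linarith
    exact ⟨d, hIoo d hdmem hda2 hdb2, fermat_min d (hIoo d hdmem hda2 hdb2) hdmin⟩

/-- Second-order Flett theorem. -/
theorem second_order_flett (f f' f'' : ℝ → ℝ) (a b : ℝ) (hab : a < b)
    (hf : ∀ x ∈ Set.Icc a b, HasDerivWithinAt f (f' x) (Set.Icc a b) x)
    (hf' : ∀ x ∈ Set.Icc a b, HasDerivWithinAt f' (f'' x) (Set.Icc a b) x)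
    (hend : f'' a = f'' b) :
    ∃ ξ ∈ Set.Ioo a b, f ξ - f a = (ξ - a) * f' ξ - ((ξ - a) ^ 2 / 2) * f'' ξ := by
  have hamem : a ∈ Set.Icc a b := Set.left_mem_Icc.2 hab.le
  have hbmem : b ∈ Set.Icc a b := Set.right_mem_Icc.2 hab.le
  set N : ℝ → ℝ := fun x => f x - f a - (x - a) * f' x with hN_def
  set G : ℝ → ℝ := fun x => (-(f'' x) * (x - a) ^ 2 - 2 * N x) / (x - a) ^ 3 with hG_def
  set P : ℝ → ℝ := fun x => f x - f a - (x - a) * f' a - (x - a) ^ 2 / 2 * f'' a with hP_def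
  set Q : ℝ → ℝ := fun x => f' x - f' a - (x - a) * f'' a with hQ_def
  set H : ℝ → ℝ := fun x => P x / (x - a) ^ 2 - Q x / (x - a) - f'' a / 2 with hH_def
  have hHa : H a = -(f'' a) / 2 := by
    simp [hH_def, hP_def, hQ_def]
    ring
  have hHne : ∀ x, x ≠ a → H x = N x / (x - a) ^ 2 := by
    intro x hx
    have hxa : x - a ≠ 0 := sub_ne_zero.2 hx
    simp only [hH_def, hP_def, hQ_def, hN_def]
    field_simp
    ring
  -- derivative of N
  have hNd : ∀ x ∈ Set.Icc a b, HasDerivWithinAt N (-(x - a) * f'' x) (Set.Icc a b) x := by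
    intro x hx
    have h1 : HasDerivWithinAt (fun y => (y - a) * f' y)
        (1 * f' x + (x - a) * f'' x) (Set.Icc a b) x :=
      ((hasDerivWithinAt_id x _).sub_const a).mul (hf' x hx)
    have h2 := ((hf x hx).sub_const (f a)).sub h1
    refine h2.congr_deriv ?_
    ring
  -- derivative of Q (for P)
  have hPd : ∀ x ∈ Set.Icc a b, HasDerivWithinAt P (Q x) (Set.Icc a b) x := by
    intro x hx
    have h1 : HasDerivWithinAt (fun y => (y - a) * f' a) (1 * f' a) (Set.Icc a b) x :=
      ((hasDerivWithinAt_id x _).sub_const a).mul_const _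
    have h2 : HasDerivWithinAt (fun y => (y - a) ^ 2 / 2 * f'' a)
        ((2 * (x - a) ^ 1 * 1) / 2 * f'' a) (Set.Icc a b) x :=
      ((((hasDerivWithinAt_id x _).sub_const a).pow 2).div_const 2).mul_const _
    have h3 := (((hf x hx).sub_const (f a)).sub h1).sub h2
    refine h3.congr_deriv ?_
    simp [hQ_def]
  -- derivative of H on Ioc
  have hHd : ∀ x ∈ Set.Ioc a b, HasDerivWithinAt H (G x) (Set.Icc a b) x := by
    intro x hx
    have hxa : x ≠ a := ne_of_gt hx.1
    have hxa' : x - a ≠ 0 := sub_ne_zero.2 hxa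
    have hd2 : HasDerivWithinAt (fun y => (y - a) ^ 2) (2 * (x - a) ^ 1 * 1)
        (Set.Icc a b) x := ((hasDerivWithinAt_id x _).sub_const a).pow 2
    have h1 := (hNd x ⟨hx.1.le, hx.2⟩).div hd2 (pow_ne_zero 2 hxa')
    have h2 : HasDerivWithinAt (fun y => N y / (y - a) ^ 2) (G x) (Set.Icc a b) x := by
      refine h1.congr_deriv ?_
      rw [hG_def]
      field_simp
    apply h2.congr_of_eventuallyEq
    · filter_upwards [nhdsWithin_le_nhds (isOpen_ne.mem_nhds hxa)] with y hy
      exact hHne y hy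
    · exact hHne x hxa
  -- littleO facts
  have hQo : Q =o[𝓝[Set.Icc a b] a] fun x => x - a := by
    have := hf' a hamem
    rw [hasDerivWithinAt_iff_isLittleO] at this
    simpa [hQ_def, smul_eq_mul, mul_comm] using this
  have hPo : P =o[𝓝[Set.Icc a b] a] fun x => (x - a) ^ 2 := by
    rw [Asymptotics.isLittleO_iff]
    intro ε hε
    have h1 := Asymptotics.isLittleO_iff.1 hQo hε
    rw [Filter.eventually_iff, Metric.mem_nhdsWithin_iff] at h1 ⊢
    obtain ⟨δ, hδ, h2⟩ := h1
    refine ⟨δ, hδ, ?_⟩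
    rintro x ⟨hxball, hx⟩
    simp only [Set.mem_setOf_eq]
    have hxd : dist x a < δ := Metric.mem_ball.1 hxball
    have hax : a ≤ x := hx.1
    have bound : ∀ t ∈ Set.Ico a x, ‖Q t‖ ≤ ε * (x - a) := by
      intro t ht
      have htm : t ∈ Set.Icc a b := ⟨ht.1, ht.2.le.trans hx.2⟩
      have htd : dist t a < δ := by
        rw [Real.dist_eq] at hxd ⊢
        rw [abs_of_nonneg (by linarith [ht.1] : (0:ℝ) ≤ t - a)]
        rw [abs_of_nonneg (by linarith : (0:ℝ) ≤ x - a)] at hxd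
        linarith [ht.2]
      have := h2 ⟨Metric.mem_ball.2 htd, htm⟩
      simp only [Set.mem_setOf_eq] at this
      rw [Real.norm_eq_abs (t - a), abs_of_nonneg (by linarith [ht.1] : (0:ℝ) ≤ t - a)] at this
      calc ‖Q t‖ ≤ ε * (t - a) := this
        _ ≤ ε * (x - a) := by
            apply mul_le_mul_of_nonneg_left _ hε.le
            linarith [ht.2]
    have hPd' : ∀ t ∈ Set.Icc a x, HasDerivWithinAt P (Q t) (Set.Icc a x) t := by
      intro t ht
      exact (hPd t ⟨ht.1, ht.2.trans hx.2⟩).mono (Set.Icc_subset_Icc_right hx.2)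
    have := norm_image_sub_le_of_norm_deriv_le_segment' hPd' bound x
      (Set.right_mem_Icc.2 hax)
    have hPa : P a = 0 := by simp [hP_def]
    rw [hPa, sub_zero] at this
    calc ‖P x‖ ≤ ε * (x - a) * (x - a) := this
      _ = ε * ‖(x - a) ^ 2‖ := by
          rw [Real.norm_eq_abs, abs_of_nonneg (by positivity)]
          ring
  -- continuity of H
  have hconta : ContinuousWithinAt H (Set.Icc a b) a := by
    have t1 := hPo.tendsto_div_nhds_zero
    have t2 := hQo.tendsto_div_nhds_zero
    have t3 := (t1.sub t2).sub_const (f'' a / 2)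
    have h00 : -(f'' a) / 2 = (0:ℝ) - 0 - f'' a / 2 := by ring
    show Tendsto H (𝓝[Set.Icc a b] a) (𝓝 (H a))
    rw [hHa, h00, hH_def]
    exact t3
  have hHcont : ContinuousOn H (Set.Icc a b) := by
    intro x hx
    rcases eq_or_ne x a with h | hxa
    · exact h ▸ hconta
    · exact (hHd x ⟨lt_of_le_of_ne hx.1 (Ne.symm hxa), hx.2⟩).continuousWithinAt
  -- endpoint condition
  have hGb : G b = 2 * (H a - H b) / (b - a) := by
    have hba : b - a ≠ 0 := sub_ne_zero.2 hab.ne'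
    have hGb' : G b = (-(f'' a) * (b - a) ^ 2 - 2 * N b) / (b - a) ^ 3 := by
      show (-(f'' b) * (b - a) ^ 2 - 2 * N b) / (b - a) ^ 3 = _
      rw [hend]
    rw [hGb', hHa, hHne b (ne_of_gt hab)]
    field_simp
  obtain ⟨ξ, hξ, hGξ⟩ := flett_core H G a b hab hHcont hHd hGb
  refine ⟨ξ, hξ, ?_⟩
  have hξa : ξ - a ≠ 0 := sub_ne_zero.2 (ne_of_gt hξ.1)
  rw [hG_def] at hGξ
  simp only at hGξ
  rw [div_eq_zero_iff] at hGξ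
  rcases hGξ with h | h
  · simp only [hN_def] at h
    linear_combination (-(1:ℝ)/2) * h
  · exact absurd h (pow_ne_zero 3 hξa)
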